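/- For every positive integer N, ∑_{n=1}^{N} Φ(n) = 2·f(N) − 1. -/

import Mathlib

/-- `f n` is the number of nonempty relatively prime subsets of `{1, ..., n}`. -/
def f (n : ℕ) : ℕ :=
  ((Finset.Icc 1 n).powerset.filter fun A => A.Nonempty ∧ A.gcd id = 1).card

/-- `Phi n` is the number of nonempty subsets of `{1, ..., n}` relatively prime to `n`. -/
def Phi (n : ℕ) : ℕ :=
  ((Finset.Icc 1 n).powerset.filter fun A => A.Nonempty ∧ (insert n A).gcd id = 1).card

def g (n : ℕ) : ℕ :=
  ((Finset.Icc 1 n).powerset.filter fun A => n ∈ A ∧ A.gcd id = 1).card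

lemma f_eq_sum_g (N : ℕ) : f N = ∑ n ∈ Finset.Icc 1 N, g n := by
  rw [f, Finset.card_eq_sum_card_fiberwise (f := fun A => A.sup id)
      (t := Finset.Icc 1 N) ?_]
  · refine Finset.sum_congr rfl fun n hn => ?_
    rw [g]
    congr 1
    ext A
    simp only [Finset.mem_filter, Finset.mem_powerset]
    simp only [Finset.mem_Icc] at hn
    constructor
    · rintro ⟨⟨hsub, hne, hgcd⟩, hsup⟩
      obtain ⟨b, hb, hbe⟩ := Finset.exists_mem_eq_sup A hne id
      refine ⟨fun a ha => ?_, ?_, hgcd⟩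
      · have h1 := (Finset.mem_Icc.mp (hsub ha)).1
        have h2 : a ≤ A.sup id := Finset.le_sup (f := id) ha
        exact Finset.mem_Icc.mpr ⟨h1, hsup ▸ h2⟩
      · have : n = b := by rw [← hsup, hbe]; rfl
        exact this ▸ hb
    · rintro ⟨hsub, hmem, hgcd⟩
      have hne : A.Nonempty := ⟨n, hmem⟩
      refine ⟨⟨fun a ha => ?_, hne, hgcd⟩, ?_⟩
      · have := Finset.mem_Icc.mp (hsub ha)
        exact Finset.mem_Icc.mpr ⟨this.1, this.2.trans hn.2⟩
      · exact le_antisymm (Finset.sup_le fun a ha => (Finset.mem_Icc.mp (hsub ha)).2)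
          (Finset.le_sup (f := id) hmem)
  · intro A hA
    simp only [Finset.mem_coe, Finset.mem_filter, Finset.mem_powerset] at hA
    obtain ⟨b, hb, hbe⟩ := Finset.exists_mem_eq_sup A hA.2.1 id
    show A.sup id ∈ Finset.Icc 1 N
    rw [hbe]
    exact hA.1 hb

lemma Phi_eq (n : ℕ) (hn : 1 ≤ n) :
    (Phi n : ℤ) = 2 * g n - (if n = 1 then 1 else 0) := by
  classical
  set T := (Finset.Icc 1 n).powerset.filter
      (fun A => A.Nonempty ∧ (insert n A).gcd id = 1) with hT
  set G := (Finset.Icc 1 n).powerset.filter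
      (fun A => n ∈ A ∧ A.gcd id = 1) with hG
  have hsplit : (T.filter fun A => n ∈ A).card + (T.filter fun A => n ∉ A).card
      = T.card := Finset.card_filter_add_card_filter_not _
  have hT1 : T.filter (fun A => n ∈ A) = G := by
    ext A
    simp only [hT, hG, Finset.mem_filter, Finset.mem_powerset]
    constructor
    · rintro ⟨⟨hsub, _, hgcd⟩, hmem⟩
      rw [Finset.insert_eq_self.mpr hmem] at hgcd
      exact ⟨hsub, hmem, hgcd⟩
    · rintro ⟨hsub, hmem, hgcd⟩
      rw [Finset.insert_eq_self.mpr hmem]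
      exact ⟨⟨hsub, ⟨n, hmem⟩, hgcd⟩, hmem⟩
  have hT2 : (T.filter fun A => n ∉ A).card = (G.erase {n}).card := by
    apply Finset.card_bij (fun A _ => insert n A)
    · intro A hA
      simp only [hT, Finset.mem_filter, Finset.mem_powerset] at hA
      obtain ⟨⟨hsub, hne, hgcd⟩, hnot⟩ := hA
      obtain ⟨a, ha⟩ := hne
      simp only [hG, Finset.mem_erase, Finset.mem_filter, Finset.mem_powerset]
      refine ⟨?_, ?_, Finset.mem_insert_self _ _, hgcd⟩
      · intro h
        have : a ∈ ({n} : Finset ℕ) := h ▸ Finset.mem_insert_of_mem ha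
        simp only [Finset.mem_singleton] at this
        exact hnot (this ▸ ha)
      · exact Finset.insert_subset (Finset.mem_Icc.mpr ⟨hn, le_refl n⟩) hsub
    · intro A hA B hB hAB
      simp only [hT, Finset.mem_filter] at hA hB
      have := congrArg (fun s => Finset.erase s n) hAB
      simpa [Finset.erase_insert hA.2, Finset.erase_insert hB.2] using this
    · intro B hB
      simp only [hG, Finset.mem_erase, Finset.mem_filter, Finset.mem_powerset] at hB
      obtain ⟨hne, hsub, hmem, hgcd⟩ := hB
      refine ⟨B.erase n, ?_, Finset.insert_erase hmem⟩
      simp only [hT, Finset.mem_filter, Finset.mem_powerset]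
      refine ⟨⟨(Finset.erase_subset _ _).trans hsub, ?_, ?_⟩, Finset.notMem_erase _ _⟩
      · exact (Finset.erase_nonempty hmem).mpr
          ((Finset.nontrivial_iff_ne_singleton hmem).mpr hne)
      · rw [Finset.insert_erase hmem]; exact hgcd
  have hPhiT : Phi n = T.card := rfl
  have hGc : g n = G.card := rfl
  by_cases h1 : n = 1
  · subst h1
    have hsing : ({1} : Finset ℕ) ∈ G := by
      simp [hG, Finset.mem_filter, Finset.mem_powerset]
    have hcard : (G.erase {1}).card = G.card - 1 := Finset.card_erase_of_mem hsing
    have hpos : 1 ≤ G.card := Finset.card_pos.mpr ⟨_, hsing⟩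
    rw [hPhiT, ← hsplit, hT1, hT2, hcard]
    simp only [if_pos rfl, hGc]
    push_cast [Nat.cast_sub hpos]
    ring
  · have hsing : ({n} : Finset ℕ) ∉ G := by
      simp only [hG, Finset.mem_filter, Finset.mem_powerset]
      rintro ⟨-, -, hgcd⟩
      simp [Finset.gcd_singleton] at hgcd
      exact h1 hgcd
    have hcard : G.erase {n} = G := Finset.erase_eq_of_notMem hsing
    rw [hPhiT, ← hsplit, hT1, hT2, hcard]
    simp only [if_neg h1, hGc]
    push_cast
    ring

/-- `∑_{n ≤ N} Φ(n) = 2 f(N) - 1` for every positive integer `N`. -/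
theorem sum_Phi_eq (N : ℕ) (hN : 0 < N) :
    (∑ n ∈ Finset.Icc 1 N, (Phi n : ℤ)) = 2 * (f N : ℤ) - 1 := by
  have h : ∀ n ∈ Finset.Icc 1 N, (Phi n : ℤ) = 2 * g n - (if n = 1 then 1 else 0) :=
    fun n hn => Phi_eq n (Finset.mem_Icc.mp hn).1
  rw [Finset.sum_congr rfl h, Finset.sum_sub_distrib]
  have h2 : (∑ n ∈ Finset.Icc 1 N, (if n = 1 then (1 : ℤ) else 0)) = 1 := by
    rw [Finset.sum_ite_eq' (Finset.Icc 1 N) 1 (fun _ => (1 : ℤ))]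
    have : (1:ℕ) ∈ Finset.Icc 1 N := Finset.mem_Icc.mpr ⟨le_rfl, hN⟩
    simp [this]
  rw [h2, f_eq_sum_g, ← Finset.mul_sum]
  push_cast
  ring
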